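/- Let d₁, d₂, d₃, Q₁, Q₂ : ℂ → ℂ with Q₁, Q₂ nowhere zero, η ∈ ℂ, and define Λ₁(u) = d₁(u)Q₁(u+η)/Q₁(u), Λ₂(u) = d₂(u)(Q₁(u−η)/Q₁(u))(Q₂(u+η)/Q₂(u)), Λ₃(u) = d₃(u)Q₂(u−η)/Q₂(u), τ₁(u) = Λ₁(u)+Λ₂(u)+Λ₃(u), τ₂(u) = Λ₁(u)Λ₂(u+η)+Λ₁(u)Λ₃(u+η)+Λ₂(u)Λ₃(u+η). Then Q₁ satisfies: d₂(x−2η)d₃(x−η)Q₁(x−3η) − τ₂(x−2η)Q₁(x−2η) + τ₁(x−η)d₁(x−2η)Q₁(x−η) − d₁(x−η)d₁(x−2η)Q₁(x) = 0 for all x ∈ ℂ. -/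

import Mathlib

/-- Eliminating `Q₂` from the Bethe-ansatz eigenvalue formulas, the polynomial
`Q₁` satisfies the third-order finite-difference equation
`d₂(x−2η)d₃(x−η)Q₁(x−3η) − τ₂(x−2η)Q₁(x−2η) + τ₁(x−η)d₁(x−2η)Q₁(x−η)
  − d₁(x−η)d₁(x−2η)Q₁(x) = 0`. -/
theorem Q₁_difference_equation
    (η : ℂ) (d₁ d₂ d₃ Q₁ Q₂ : ℂ → ℂ)
    (hQ₁ : ∀ u, Q₁ u ≠ 0) (hQ₂ : ∀ u, Q₂ u ≠ 0)
    (Λ₁ Λ₂ Λ₃ τ₁ τ₂ : ℂ → ℂ)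
    (hΛ₁ : ∀ u, Λ₁ u = d₁ u * (Q₁ (u + η) / Q₁ u))
    (hΛ₂ : ∀ u, Λ₂ u = d₂ u * (Q₁ (u - η) / Q₁ u) * (Q₂ (u + η) / Q₂ u))
    (hΛ₃ : ∀ u, Λ₃ u = d₃ u * (Q₂ (u - η) / Q₂ u))
    (hτ₁ : ∀ u, τ₁ u = Λ₁ u + Λ₂ u + Λ₃ u)
    (hτ₂ : ∀ u, τ₂ u = Λ₁ u * Λ₂ (u + η) + Λ₁ u * Λ₃ (u + η) + Λ₂ u * Λ₃ (u + η)) :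
    ∀ x : ℂ,
      d₂ (x - 2 * η) * d₃ (x - η) * Q₁ (x - 3 * η)
        - τ₂ (x - 2 * η) * Q₁ (x - 2 * η)
        + τ₁ (x - η) * d₁ (x - 2 * η) * Q₁ (x - η)
        - d₁ (x - η) * d₁ (x - 2 * η) * Q₁ x = 0 := by
  intro x
  simp only [hτ₂, hτ₁, hΛ₁, hΛ₂, hΛ₃]
  have e1 : x - 2 * η + η = x - η := by ring
  have e2 : x - 2 * η - η = x - 3 * η := by ring
  have e3 : x - η + η = x := by ring
  have e4 : x - η - η = x - 2 * η := by ring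
  rw [e1, e2, e3, e4]
  have ha := hQ₁ x; have hb := hQ₁ (x - η); have hc := hQ₁ (x - 2*η)
  have hd := hQ₁ (x - 3*η); have hp := hQ₂ x; have hq := hQ₂ (x - η)
  have hr := hQ₂ (x - 2*η)
  generalize Q₁ x = a at *
  generalize Q₁ (x - η) = b at *
  generalize Q₁ (x - 2*η) = c at *
  generalize Q₁ (x - 3*η) = d at *
  generalize Q₂ x = p at *
  generalize Q₂ (x - η) = q at *
  generalize Q₂ (x - 2*η) = r at *
  generalize d₁ (x - 2*η) = A1 at *
  generalize d₁ (x - η) = A2 at *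
  generalize d₂ (x - 2*η) = B1 at *
  generalize d₂ (x - η) = B2 at *
  generalize d₃ (x - η) = C1 at *
  field_simp [ha, hb, hc, hd, hp, hq, hr]
  have hb1 : b * b⁻¹ = 1 := mul_inv_cancel₀ hb
  have hc1 : c * c⁻¹ = 1 := mul_inv_cancel₀ hc
  have hq1 : q * q⁻¹ = 1 := mul_inv_cancel₀ hq
  have hr1 : r * r⁻¹ = 1 := mul_inv_cancel₀ hr
  set S := B1 * C1 * d * b ^ 2 * q ^ 2
      + C1 * A1 * b ^ 3 * q * r
      + A1 * b ^ 2 * B2 * c * p * q with hS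
  ring
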